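/- Let τ be a positive integer and let G_0, G_1, …, G_{τ−1} be matrices in ℝ^{m×n}. Then ‖G_0‖_F² ≤ (2/τ) · Σ_{r=0}^{τ−1} ‖G_r‖_F² + (τ−1) · Σ_{r=0}^{τ−2} ‖G_{r+1} − G_r‖_F². -/

import Mathlib

open Finset

/-- The squared Frobenius norm of a real matrix: the sum of squares of all entries. -/
noncomputable def frobSq {a b : ℕ} (A : Matrix (Fin a) (Fin b) ℝ) : ℝ :=
  ∑ i, ∑ j, (A i j) ^ 2

lemma gauss_sum_real (τ : ℕ) :
    ∑ r ∈ Finset.range τ, (r : ℝ) = (τ : ℝ) * ((τ : ℝ) - 1) / 2 := by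
  induction τ with
  | zero => simp
  | succ k ih => rw [Finset.sum_range_succ, ih]; push_cast; ring

lemma scalar_version (τ : ℕ) (hτ : 0 < τ) (x : ℕ → ℝ) :
    x 0 ^ 2 ≤ (2 / (τ : ℝ)) * ∑ r ∈ Finset.range τ, x r ^ 2
      + ((τ : ℝ) - 1) * ∑ r ∈ Finset.range (τ - 1), (x (r + 1) - x r) ^ 2 := by
  set S := ∑ r ∈ Finset.range τ, x r ^ 2 with hS
  set D := ∑ r ∈ Finset.range (τ - 1), (x (r + 1) - x r) ^ 2 with hD
  have hDnn : 0 ≤ D := Finset.sum_nonneg fun i _ => sq_nonneg _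
  have hτR : (0:ℝ) < (τ:ℝ) := by exact_mod_cast hτ
  have key : (τ:ℝ) * x 0 ^ 2 ≤ 2 * S + (τ:ℝ) * ((τ:ℝ) - 1) * D := by
    have step : ∀ r ∈ Finset.range τ,
        x 0 ^ 2 ≤ 2 * x r ^ 2 + 2 * (r : ℝ) * D := by
      intro r hr
      have hrτ := Finset.mem_range.1 hr
      have htel : ∑ s ∈ Finset.range r, (x (s + 1) - x s) = x r - x 0 :=
        Finset.sum_range_sub (fun i => x i) r
      have hcs : (∑ s ∈ Finset.range r, (x (s + 1) - x s)) ^ 2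
          ≤ (r : ℝ) * ∑ s ∈ Finset.range r, (x (s + 1) - x s) ^ 2 := by
        have := sq_sum_le_card_mul_sum_sq (s := Finset.range r)
          (f := fun s => x (s + 1) - x s)
        simpa using this
      have hDle : ∑ s ∈ Finset.range r, (x (s + 1) - x s) ^ 2 ≤ D := by
        apply Finset.sum_le_sum_of_subset_of_nonneg
        · exact Finset.range_subset_range.2 (by omega)
        · intro i _ _; exact sq_nonneg _
      have h1 : (x r - x 0) ^ 2 ≤ (r : ℝ) * D := by
        rw [← htel]
        calc _ ≤ (r : ℝ) * ∑ s ∈ Finset.range r, (x (s + 1) - x s) ^ 2 := hcs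
          _ ≤ (r : ℝ) * D := mul_le_mul_of_nonneg_left hDle (Nat.cast_nonneg r)
      nlinarith [sq_nonneg (2 * x r - x 0)]
    have hsum : ∑ r ∈ Finset.range τ, x 0 ^ 2
        ≤ ∑ r ∈ Finset.range τ, (2 * x r ^ 2 + 2 * (r : ℝ) * D) :=
      Finset.sum_le_sum step
    have hlhs : ∑ r ∈ Finset.range τ, x 0 ^ 2 = (τ:ℝ) * x 0 ^ 2 := by
      simp [mul_comm]
    have hrhs : ∑ r ∈ Finset.range τ, (2 * x r ^ 2 + 2 * (r : ℝ) * D)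
        = 2 * S + (τ:ℝ) * ((τ:ℝ) - 1) * D := by
      rw [Finset.sum_add_distrib, ← Finset.mul_sum, ← Finset.sum_mul]
      have h2 : ∑ r ∈ Finset.range τ, 2 * (r:ℝ)
          = 2 * ((τ:ℝ) * ((τ:ℝ) - 1) / 2) := by
        rw [← Finset.mul_sum, gauss_sum_real]
      rw [h2]; ring
    rw [hlhs, hrhs] at hsum
    linarith
  calc x 0 ^ 2 = ((τ:ℝ) * x 0 ^ 2) / (τ:ℝ) := by field_simp
    _ ≤ (2 * S + (τ:ℝ) * ((τ:ℝ) - 1) * D) / (τ:ℝ) := by gcongr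
    _ = (2 / (τ : ℝ)) * S + ((τ:ℝ) - 1) * D := by field_simp

lemma swap_sums {m n : ℕ} (k : ℕ) (c : ℝ) (F : ℕ → Matrix (Fin m) (Fin n) ℝ) :
    ∑ i, ∑ j, c * ∑ r ∈ Finset.range k, (F r i j) ^ 2
      = c * ∑ r ∈ Finset.range k, frobSq (F r) := by
  simp only [frobSq, Finset.mul_sum]
  rw [Finset.sum_congr rfl (fun i _ => Finset.sum_comm), Finset.sum_comm]

/-- For a positive integer `τ` and matrices `G 0, …, G (τ-1)` in `ℝ^{m×n}`,
`‖G 0‖_F² ≤ (2/τ) ∑_{r<τ} ‖G r‖_F² + (τ-1) ∑_{r<τ-1} ‖G (r+1) - G r‖_F²`. -/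
theorem stmt0 {m n : ℕ} (τ : ℕ) (hτ : 0 < τ) (G : ℕ → Matrix (Fin m) (Fin n) ℝ) :
    frobSq (G 0) ≤ (2 / (τ : ℝ)) * ∑ r ∈ Finset.range τ, frobSq (G r)
      + ((τ : ℝ) - 1) * ∑ r ∈ Finset.range (τ - 1), frobSq (G (r + 1) - G r) := by
  have h : ∀ i j, (G 0 i j) ^ 2
      ≤ (2 / (τ : ℝ)) * ∑ r ∈ Finset.range τ, (G r i j) ^ 2
        + ((τ : ℝ) - 1) * ∑ r ∈ Finset.range (τ - 1), ((G (r+1) - G r) i j) ^ 2 := by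
    intro i j
    have := scalar_version τ hτ (fun r => G r i j)
    simpa [Matrix.sub_apply] using this
  calc frobSq (G 0)
      ≤ ∑ i, ∑ j, ((2 / (τ : ℝ)) * ∑ r ∈ Finset.range τ, (G r i j) ^ 2
        + ((τ : ℝ) - 1) * ∑ r ∈ Finset.range (τ - 1), ((G (r+1) - G r) i j) ^ 2) := by
        unfold frobSq
        apply Finset.sum_le_sum; intro i _
        apply Finset.sum_le_sum; intro j _
        exact h i j
    _ = _ := by
        simp only [Finset.sum_add_distrib]
        rw [swap_sums τ _ G, swap_sums (τ-1) _ (fun r => G (r+1) - G r)]
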